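/- arXiv:1202.1261 — 2 statements merged into one kernel-verified Lean document; each statement's English description precedes it below -/
import Mathlib

section
/- Let σ ⊆ ℚⁿ be a pointed polyhedral cone with dual σ∨, and let P = Q + σ∨ where Q is a polytope with vertices in ℤⁿ. Then for every integer e ≥ 1, the convex hull of the set E_{[e,P]} = {m₁ + ⋯ + m_e : m₁, …, m_e ∈ P ∩ ℤⁿ} equals eP (the e-th Minkowski multiple of P). -/
open scoped Pointwise
open Finset

namespace Paper

/-- Standard pairing on `ℚⁿ`. -/
def dot {n : ℕ} (m v : Fin n → ℚ) : ℚ := ∑ i, m i * v i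

/-- Dual cone `σ∨ = {m | ∀ v ∈ σ, ⟨m,v⟩ ≥ 0}`. -/
def dualCone {n : ℕ} (σ : Set (Fin n → ℚ)) : Set (Fin n → ℚ) :=
  {m | ∀ v ∈ σ, 0 ≤ dot m v}

/-- A polyhedral cone: the cone generated by finitely many vectors. -/
def IsPolyhedralCone {n : ℕ} (σ : Set (Fin n → ℚ)) : Prop :=
  ∃ (k : ℕ) (g : Fin k → Fin n → ℚ),
    σ = {v | ∃ c : Fin k → ℚ, (∀ i, 0 ≤ c i) ∧ v = ∑ i, c i • g i}

/-- A pointed (strongly convex) cone contains no line. -/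
def Pointed {n : ℕ} (σ : Set (Fin n → ℚ)) : Prop := ∀ v ∈ σ, -v ∈ σ → v = 0

/-- The canonical embedding `ℤⁿ → ℚⁿ`. -/
def Lq {n : ℕ} (m : Fin n → ℤ) : Fin n → ℚ := fun i => (m i : ℚ)

/-- A rational vector is a lattice point if all coordinates are integers. -/
def IsLatticePt {n : ℕ} (v : Fin n → ℚ) : Prop := ∀ i, ∃ z : ℤ, v i = (z : ℚ)

/-- A `σ`-polyhedron: Minkowski sum of a (nonempty) polytope with the cone `σ`. -/
def IsSigmaPolyhedron {n : ℕ} (σ Δ : Set (Fin n → ℚ)) : Prop :=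
  ∃ F : Finset (Fin n → ℚ), F.Nonempty ∧ Δ = convexHull ℚ (↑F : Set (Fin n → ℚ)) + σ

/-- An integral `σv`-polyhedron: Minkowski sum of a lattice polytope with `σv`. -/
def IsIntegralPoly {n : ℕ} (σv P : Set (Fin n → ℚ)) : Prop :=
  ∃ F : Finset (Fin n → ℤ), F.Nonempty ∧ P = convexHull ℚ (Lq '' (↑F : Set (Fin n → ℤ))) + σv

/-- The `e`-fold Minkowski sum `eP` of `P`, with the convention `0P = σv`. -/
def mink {n : ℕ} (σv P : Set (Fin n → ℚ)) : ℕ → Set (Fin n → ℚ)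
  | 0 => σv
  | 1 => P
  | (e + 2) => mink σv P (e + 1) + P

/-- The semigroup `σ∨ ∩ ℤⁿ` of lattice points of the dual cone. -/
def latticeDual {n : ℕ} (σ : Set (Fin n → ℚ)) : AddSubmonoid (Fin n → ℤ) where
  carrier := {m | Lq m ∈ dualCone σ}
  zero_mem' := by
    intro v hv
    simp [dot, Lq]
  add_mem' := by
    intro a b ha hb v hv
    have h1 := ha v hv
    have h2 := hb v hv
    have h : dot (Lq (a + b)) v = dot (Lq a) v + dot (Lq b) v := by
      simp only [dot, Lq, Pi.add_apply]
      rw [← Finset.sum_add_distrib]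
      apply Finset.sum_congr rfl
      intro i _
      push_cast
      ring
    rw [Set.mem_setOf_eq] at *
    simpa [dualCone, h] using add_nonneg h1 h2

/-- The monomial `χ^m` in the semigroup algebra `k[σ∨ ∩ ℤⁿ]`. -/
noncomputable def mono (k : Type*) [CommRing k] {n : ℕ} (σ : Set (Fin n → ℚ))
    (m : latticeDual σ) : AddMonoidAlgebra k (latticeDual σ) :=
  AddMonoidAlgebra.single m 1

/-- The monomial ideal `I[P]` generated by the monomials `χ^m`, `m ∈ P ∩ ℤⁿ`. -/
noncomputable def idealOf (k : Type*) [CommRing k] {n : ℕ} (σ : Set (Fin n → ℚ))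
    (P : Set (Fin n → ℚ)) : Ideal (AddMonoidAlgebra k (latticeDual σ)) :=
  Ideal.span {f | ∃ m : latticeDual σ, Lq (m : Fin n → ℤ) ∈ P ∧ f = mono k σ m}

/-- `a` satisfies an equation of integral dependence over the ideal `I`:
`a^r + λ₁ a^(r-1) + ⋯ + λ_r = 0` with `λᵢ ∈ Iⁱ`. -/
def IntegralOverIdeal {A : Type*} [CommRing A] (I : Ideal A) (a : A) : Prop :=
  ∃ r : ℕ, 0 < r ∧ ∃ c : ℕ → A, (∀ i ∈ Finset.Icc 1 r, c i ∈ I ^ i) ∧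
    a ^ r + ∑ i ∈ Finset.Icc 1 r, c i * a ^ (r - i) = 0

/-- A monomial (torus-homogeneous) ideal of `k[σ∨ ∩ ℤⁿ]`. -/
def IsMonomialIdeal (k : Type*) [CommRing k] {n : ℕ} (σ : Set (Fin n → ℚ))
    (I : Ideal (AddMonoidAlgebra k (latticeDual σ))) : Prop :=
  ∃ S : Set (latticeDual σ), I = Ideal.span {f | ∃ m ∈ S, f = mono k σ m}

lemma dot_add_left {n : ℕ} (a b v : Fin n → ℚ) : dot (a + b) v = dot a v + dot b v := by
  simp [dot, ← Finset.sum_add_distrib, add_mul]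

lemma dot_smul_left {n : ℕ} (c : ℚ) (a v : Fin n → ℚ) : dot (c • a) v = c * dot a v := by
  simp [dot, Finset.mul_sum, mul_assoc]

lemma dualCone_convex {n : ℕ} (σ : Set (Fin n → ℚ)) : Convex ℚ (dualCone σ) := by
  intro x hx y hy a b ha hb _ v hv
  have h1 := hx v hv
  have h2 := hy v hv
  have : dot (a • x + b • y) v = a * dot x v + b * dot y v := by
    rw [dot_add_left, dot_smul_left, dot_smul_left]
  simp only [dualCone, Set.mem_setOf_eq] at *
  rw [this]
  exact add_nonneg (mul_nonneg ha h1) (mul_nonneg hb h2)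

lemma zero_mem_dualCone {n : ℕ} (σ : Set (Fin n → ℚ)) : (0 : Fin n → ℚ) ∈ dualCone σ := by
  intro v _; simp [dot]

lemma smul_mem_dualCone {n : ℕ} (σ : Set (Fin n → ℚ)) {c : ℚ} (hc : 0 ≤ c)
    {w : Fin n → ℚ} (hw : w ∈ dualCone σ) : c • w ∈ dualCone σ := by
  intro v hv
  rw [dot_smul_left]
  exact mul_nonneg hc (hw v hv)

/-- Every rational vector has a positive integer multiple with integer coordinates. -/
lemma exists_nat_smul_lattice {n : ℕ} (w : Fin n → ℚ) :
    ∃ N : ℕ, 0 < N ∧ IsLatticePt ((N : ℚ) • w) := by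
  refine ⟨∏ i, (w i).den, ?_, ?_⟩
  · exact Finset.prod_pos fun i _ => (w i).den_pos
  · intro i
    obtain ⟨k, hk⟩ := Finset.dvd_prod_of_mem (f := fun i => (w i).den) (Finset.mem_univ i)
    refine ⟨(k : ℤ) * (w i).num, ?_⟩
    have hden : ((w i).den : ℚ) * w i = (w i).num := Rat.den_mul_eq_num (w i)
    have : ((∏ j, (w j).den : ℕ) : ℚ) = ((w i).den : ℚ) * (k : ℚ) := by
      exact_mod_cast congrArg (fun m : ℕ => (m : ℚ)) hk
    simp only [Pi.smul_apply, smul_eq_mul]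
    rw [this]
    push_cast
    rw [mul_comm ((w i).den : ℚ) (k : ℚ), mul_assoc, hden]

/-- The dual cone is contained in the convex hull of its lattice points. -/
lemma dualCone_subset_hull_lattice {n : ℕ} (σ : Set (Fin n → ℚ)) :
    dualCone σ ⊆ convexHull ℚ {x | x ∈ dualCone σ ∧ IsLatticePt x} := by
  intro w hw
  obtain ⟨N, hN, hNw⟩ := exists_nat_smul_lattice w
  have hN0 : (0 : ℚ) < (N : ℚ) := by exact_mod_cast hN
  have hNw' : (N : ℚ) • w ∈ dualCone σ := smul_mem_dualCone σ (le_of_lt hN0) hw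
  have h0 : (0 : Fin n → ℚ) ∈ {x | x ∈ dualCone σ ∧ IsLatticePt x} :=
    ⟨zero_mem_dualCone σ, fun i => ⟨0, by simp⟩⟩
  have h1 : ((N : ℚ) • w) ∈ {x | x ∈ dualCone σ ∧ IsLatticePt x} := ⟨hNw', hNw⟩
  have key : w = (1 / (N : ℚ)) • ((N : ℚ) • w) + (1 - 1 / (N : ℚ)) • (0 : Fin n → ℚ) := by
    rw [smul_smul, one_div, inv_mul_cancel₀ (ne_of_gt hN0)]
    simp
  rw [key]
  refine (convex_convexHull ℚ _) (subset_convexHull ℚ _ h1) (subset_convexHull ℚ _ h0)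
    ?_ ?_ (by ring)
  · positivity
  · have : 1 / (N : ℚ) ≤ 1 := by
      rw [div_le_one hN0]; exact_mod_cast hN
    linarith

lemma latticePt_add {n : ℕ} {a b : Fin n → ℚ} (ha : IsLatticePt a) (hb : IsLatticePt b) :
    IsLatticePt (a + b) := by
  intro i
  obtain ⟨x, hx⟩ := ha i
  obtain ⟨y, hy⟩ := hb i
  exact ⟨x + y, by simp [hx, hy]⟩

/-- for an integral `σ∨`-polyhedron `P` and every `e ≥ 1`, the convex hull of
`E_{[e,P]} = {m₁ + ⋯ + m_e : mᵢ ∈ P ∩ ℤⁿ}` equals the `e`-th Minkowski multiple `eP`. -/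
theorem statement3 {n : ℕ} (σ : Set (Fin n → ℚ))
    (hσ : IsPolyhedralCone σ) (hσp : Pointed σ)
    (P : Set (Fin n → ℚ)) (hP : IsIntegralPoly (dualCone σ) P)
    (e : ℕ) (he : 1 ≤ e) :
    convexHull ℚ {m : Fin n → ℚ | ∃ f : Fin e → (Fin n → ℚ),
        (∀ i, f i ∈ P ∧ IsLatticePt (f i)) ∧ m = ∑ i, f i} =
      mink (dualCone σ) P e := by
  obtain ⟨F, hFne, hPF⟩ := hP
  -- P is convex
  have hPconv : Convex ℚ P := by
    rw [hPF]
    exact (convex_convexHull ℚ _).add (dualCone_convex σ)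
  -- the lattice-point set
  set L : Set (Fin n → ℚ) := {x | x ∈ P ∧ IsLatticePt x} with hL
  -- the E-sets
  set E : ∀ e : ℕ, Set (Fin n → ℚ) := fun e => {m : Fin n → ℚ | ∃ f : Fin e → (Fin n → ℚ),
      (∀ i, f i ∈ P ∧ IsLatticePt (f i)) ∧ m = ∑ i, f i} with hE
  -- mink is convex for all e ≥ 1 and contains E e, and conversely
  -- Step 1: P ⊆ convexHull ℚ L
  have hPsubL : P ⊆ convexHull ℚ L := by
    have hsum : Lq '' (↑F : Set (Fin n → ℤ)) + {x | x ∈ dualCone σ ∧ IsLatticePt x} ⊆ L := by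
      rintro z ⟨v, hv, w, hw, rfl⟩
      constructor
      · rw [hPF]
        exact Set.add_mem_add (subset_convexHull ℚ _ hv) hw.1
      · refine latticePt_add ?_ hw.2
        obtain ⟨m, _, rfl⟩ := hv
        exact fun i => ⟨m i, rfl⟩
    calc P = convexHull ℚ (Lq '' (↑F : Set (Fin n → ℤ))) + dualCone σ := hPF
      _ ⊆ convexHull ℚ (Lq '' (↑F : Set (Fin n → ℤ)))
          + convexHull ℚ {x | x ∈ dualCone σ ∧ IsLatticePt x} := by
          exact Set.add_subset_add_left (dualCone_subset_hull_lattice σ)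
      _ = convexHull ℚ (Lq '' (↑F : Set (Fin n → ℤ)) + {x | x ∈ dualCone σ ∧ IsLatticePt x}) :=
          (convexHull_add _ _).symm
      _ ⊆ convexHull ℚ L := convexHull_mono hsum
  -- L ⊆ E 1
  have hLE1 : L ⊆ E 1 := by
    rintro x ⟨hx, hlx⟩
    exact ⟨fun _ => x, fun _ => ⟨hx, hlx⟩, by simp⟩
  -- E (e+1) + L ⊆ E (e+2)
  have hEstep : ∀ e : ℕ, E (e + 1) + L ⊆ E (e + 2) := by
    rintro e z ⟨s, ⟨f, hf, rfl⟩, x, hx, rfl⟩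
    refine ⟨Fin.snoc f x, ?_, ?_⟩
    · intro i
      refine Fin.lastCases ?_ ?_ i
      · simpa using (show x ∈ P ∧ IsLatticePt x from hx)
      · intro j; simpa using hf j
    · simp [Fin.sum_univ_castSucc]
  -- forward inclusion helper: sums of e elements of P lie in mink e
  have hmemMink : ∀ e : ℕ, 1 ≤ e → ∀ f : Fin e → (Fin n → ℚ), (∀ i, f i ∈ P) →
      (∑ i, f i) ∈ mink (dualCone σ) P e := by
    intro e
    induction e with
    | zero => omega
    | succ e ih =>
      intro _ f hf
      match e with
      | 0 => simpa [mink] using hf 0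
      | e + 1 =>
        show _ ∈ mink (dualCone σ) P (e + 1) + P
        rw [Fin.sum_univ_castSucc]
        exact Set.add_mem_add (ih (by omega) _ fun i => hf i.castSucc) (hf (Fin.last _))
  -- mink is convex
  have hminkConv : ∀ e : ℕ, 1 ≤ e → Convex ℚ (mink (dualCone σ) P e) := by
    intro e
    induction e with
    | zero => omega
    | succ e ih =>
      intro _
      match e with
      | 0 => exact hPconv
      | e + 1 => exact (ih (by omega)).add hPconv
  -- reverse inclusion: mink e ⊆ convexHull ℚ (E e)
  have hrev : ∀ e : ℕ, 1 ≤ e → mink (dualCone σ) P e ⊆ convexHull ℚ (E e) := by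
    intro e
    induction e with
    | zero => omega
    | succ e ih =>
      intro _
      match e with
      | 0 =>
        exact hPsubL.trans (convexHull_mono hLE1)
      | e + 1 =>
        calc mink (dualCone σ) P (e + 2) = mink (dualCone σ) P (e + 1) + P := rfl
          _ ⊆ convexHull ℚ (E (e + 1)) + convexHull ℚ L :=
              Set.add_subset_add (ih (by omega)) hPsubL
          _ = convexHull ℚ (E (e + 1) + L) := (convexHull_add _ _).symm
          _ ⊆ convexHull ℚ (E (e + 2)) := convexHull_mono (hEstep e)
  -- combine
  apply Set.Subset.antisymm
  · apply convexHull_min _ (hminkConv e he)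
    rintro m ⟨f, hf, rfl⟩
    exact hmemMink e he f fun i => (hf i).1
  · exact hrev e he

end Paper
end

section
/- Let σ ⊆ ℚⁿ be an n-dimensional pointed polyhedral cone and P = Q + σ∨ an integral σ∨-polyhedron (Q a polytope with vertices in ℤⁿ). Then for every integer e ≥ n−1, the polyhedron eP is normal: for all s ≥ 1, (s·(eP)) ∩ ℤⁿ = {m₁ + ⋯ + m_s : mᵢ ∈ (eP) ∩ ℤⁿ}. -/
open scoped Pointwise
open Finset

namespace Paper

section Aux
variable {n : ℕ} {σ : Set (Fin n → ℚ)}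

/-- `Lq` as an additive monoid hom. -/
def LqHom (n : ℕ) : (Fin n → ℤ) →+ (Fin n → ℚ) where
  toFun := Lq
  map_zero' := by funext i; simp [Lq]
  map_add' a b := by funext i; simp [Lq]

lemma Lq_add (a b : Fin n → ℤ) : Lq (a + b) = Lq a + Lq b := (LqHom n).map_add a b
lemma Lq_zero : Lq (0 : Fin n → ℤ) = 0 := (LqHom n).map_zero
lemma Lq_sub (a b : Fin n → ℤ) : Lq (a - b) = Lq a - Lq b :=
  map_sub (AddMonoidHom.toIntLinearMap (LqHom n)) a b
lemma Lq_listSum (L : List (Fin n → ℤ)) : Lq L.sum = (L.map Lq).sum :=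
  map_list_sum (LqHom n) L
lemma Lq_finSum {s : ℕ} (f : Fin s → (Fin n → ℤ)) : Lq (∑ i, f i) = ∑ i, Lq (f i) :=
  map_sum (LqHom n) f univ

lemma dot_add (a b v : Fin n → ℚ) : dot (a + b) v = dot a v + dot b v := by
  simp only [dot, Pi.add_apply, add_mul, Finset.sum_add_distrib]

lemma dot_smul (c : ℚ) (a v : Fin n → ℚ) : dot (c • a) v = c * dot a v := by
  simp only [dot, Pi.smul_apply, smul_eq_mul, Finset.mul_sum, mul_assoc]

lemma dc_zero : (0 : Fin n → ℚ) ∈ dualCone σ := by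
  intro v hv; simp [dot]

lemma dc_add {a b : Fin n → ℚ} (ha : a ∈ dualCone σ) (hb : b ∈ dualCone σ) :
    a + b ∈ dualCone σ := by
  intro v hv; rw [dot_add]; exact add_nonneg (ha v hv) (hb v hv)

lemma dc_smul {c : ℚ} (hc : 0 ≤ c) {a : Fin n → ℚ} (ha : a ∈ dualCone σ) :
    c • a ∈ dualCone σ := by
  intro v hv; rw [dot_smul]; exact mul_nonneg hc (ha v hv)

lemma dc_addself : dualCone σ + dualCone σ = dualCone σ := by
  apply Set.Subset.antisymm
  · rintro x ⟨a, ha, b, hb, rfl⟩; exact dc_add ha hb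
  · intro x hx; exact ⟨x, hx, 0, dc_zero, by simp⟩

/-- sum of a list of elements of a convex set lies in `len • C`. -/
lemma list_sum_mem_smul_convex {C : Set (Fin n → ℚ)} (hC : Convex ℚ C) (hne : C.Nonempty) :
    ∀ L : List (Fin n → ℚ), (∀ x ∈ L, x ∈ C) → L.sum ∈ (L.length : ℚ) • C := by
  intro L
  induction L with
  | nil => intro _; simp only [List.sum_nil, List.length_nil, Nat.cast_zero,
      Set.zero_smul_set hne]; exact Set.zero_mem_zero
  | cons a L ih =>
      intro h
      have h1 : ((L.length + 1 : ℕ) : ℚ) • C = (1 : ℚ) • C + (L.length : ℚ) • C := by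
        push_cast
        rw [add_comm (L.length : ℚ) 1, hC.add_smul zero_le_one (by positivity)]
      simp only [List.sum_cons, List.length_cons, h1]
      exact Set.add_mem_add (by rw [one_smul]; exact h a (List.mem_cons_self))
        (ih fun x hx => h x (List.mem_cons_of_mem _ hx))

lemma fin_sum_mem_smul_convex {C : Set (Fin n → ℚ)} (hC : Convex ℚ C) (hne : C.Nonempty)
    {s : ℕ} (g : Fin s → (Fin n → ℚ)) (h : ∀ i, g i ∈ C) : ∑ i, g i ∈ (s : ℚ) • C := by
  have := list_sum_mem_smul_convex hC hne (List.ofFn g) (by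
    intro x hx; rw [List.mem_ofFn] at hx; obtain ⟨i, rfl⟩ := hx; exact h i)
  simpa [List.sum_ofFn] using this

lemma comb_mem_smul_convexHull {k : ℕ} (p : Fin k → (Fin n → ℚ)) (hk : 0 < k)
    (w : Fin k → ℚ) (h0 : ∀ i, 0 ≤ w i) {c : ℚ} (hc : ∑ i, w i = c) :
    ∑ i, w i • p i ∈ c • convexHull ℚ (Set.range p) := by
  have hc0 : (0:ℚ) ≤ c := hc ▸ Finset.sum_nonneg fun i _ => h0 i
  rcases eq_or_lt_of_le hc0 with h | h
  · -- c = 0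
    have hw : ∀ i, w i = 0 := by
      intro i
      have := Finset.sum_eq_zero_iff_of_nonneg (fun i _ => h0 i) |>.1 (by rw [hc, ← h])
      exact this i (mem_univ i)
    have hne : (convexHull ℚ (Set.range p)).Nonempty :=
      ⟨p ⟨0, hk⟩, subset_convexHull ℚ _ (Set.mem_range_self _)⟩
    rw [← h, Set.zero_smul_set hne]
    simp [hw]
  · -- c > 0
    have hcm : Finset.univ.centerMass w p ∈ convexHull ℚ (Set.range p) :=
      Finset.centerMass_mem_convexHull _ (fun i _ => h0 i) (by rw [hc]; exact h)
        (fun i _ => Set.mem_range_self i)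
    have : ∑ i, w i • p i = c • Finset.univ.centerMass w p := by
      rw [Finset.centerMass, hc, smul_smul, mul_inv_cancel₀ (ne_of_gt h), one_smul]
    rw [this]
    exact Set.smul_mem_smul_set hcm

lemma exists_weights_of_mem_convexHull {k : ℕ} (p : Fin k → (Fin n → ℚ)) {x : Fin n → ℚ}
    (hx : x ∈ convexHull ℚ (Set.range p)) :
    ∃ w : Fin k → ℚ, (∀ i, 0 ≤ w i) ∧ ∑ i, w i = 1 ∧ ∑ i, w i • p i = x := by
  rw [convexHull_range_eq_exists_affineCombination] at hx
  obtain ⟨s, w, hw0, hw1, hwx⟩ := hx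
  classical
  refine ⟨fun i => if i ∈ s then w i else 0, fun i => ?_, ?_, ?_⟩
  · by_cases h : i ∈ s <;> simp [h, hw0 i]
  · rw [Finset.sum_ite_mem, Finset.univ_inter, hw1]
  · rw [← hwx, s.affineCombination_eq_linear_combination p w hw1]
    have : ∀ i : Fin k, (if i ∈ s then w i else 0) • p i = if i ∈ s then w i • p i else 0 := by
      intro i; split <;> simp
    simp only [this]
    rw [Finset.sum_ite_mem, Finset.univ_inter]

end Aux

section Aux2
variable {n : ℕ} {σ : Set (Fin n → ℚ)}

/-- The lattice points of a subset of `ℚⁿ`. -/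
def latticeIn {n : ℕ} (S : Set (Fin n → ℚ)) : Set (Fin n → ℤ) := {z | Lq z ∈ S}

lemma latticeIn_finite {k : ℕ} (p : Fin k → (Fin n → ℚ)) :
    (latticeIn (convexHull ℚ (Set.range p))).Finite := by
  classical
  set M : Fin n → ℚ := fun j => ∑ i, |p i j| with hM
  have key : ∀ z ∈ latticeIn (convexHull ℚ (Set.range p)), ∀ j, |(z j : ℚ)| ≤ M j := by
    intro z hz j
    obtain ⟨w, hw0, hw1, hwx⟩ := exists_weights_of_mem_convexHull p hz
    have hzj : (z j : ℚ) = ∑ i, w i * p i j := by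
      have := congrFun hwx j
      simpa [Lq, Finset.sum_apply] using this.symm
    rw [hzj]
    calc |∑ i, w i * p i j| ≤ ∑ i, |w i * p i j| := Finset.abs_sum_le_sum_abs _ _
      _ ≤ ∑ i, |p i j| := by
          apply Finset.sum_le_sum
          intro i _
          rw [abs_mul, abs_of_nonneg (hw0 i)]
          have hwi1 : w i ≤ 1 := by
            rw [← hw1]
            exact Finset.single_le_sum (fun i _ => hw0 i) (mem_univ i)
          nlinarith [abs_nonneg (p i j)]
  apply Set.Finite.subset (Set.finite_Icc (fun j => -⌈M j⌉) (fun j => ⌈M j⌉))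
  intro z hz
  constructor <;> intro j
  · have h := (abs_le.1 (key z hz j)).1
    have h2 : ((-⌈M j⌉ : ℤ) : ℚ) ≤ (z j : ℚ) := by
      push_cast
      linarith [Int.le_ceil (M j)]
    exact_mod_cast h2
  · have h := (abs_le.1 (key z hz j)).2
    have h2 : ((z j : ℚ)) ≤ ((⌈M j⌉ : ℤ) : ℚ) := le_trans h (Int.le_ceil (M j))
    exact_mod_cast h2

/-- Peeling off one point with coefficient `≥ 1`. -/
lemma peel {k : ℕ} (p : Fin k → (Fin n → ℚ)) (b : Fin k → ℚ) (hb : ∀ i, 0 ≤ b i)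
    {c : ℚ} (hsum : ∑ i, b i = c) (j : Fin k) (hbj : 1 ≤ b j) {v : Fin n → ℚ}
    (hv : v ∈ dualCone σ) {x : Fin n → ℚ} (hx : x = (∑ i, b i • p i) + v) :
    x - p j ∈ (c - 1) • convexHull ℚ (Set.range p) + dualCone σ := by
  classical
  set b' : Fin k → ℚ := fun i => b i - (if i = j then 1 else 0) with hb'
  have hb'0 : ∀ i, 0 ≤ b' i := by
    intro i; simp only [hb']
    split
    · rename_i h; subst h; linarith
    · simpa using hb i
  have hone : ∑ i, (if i = j then (1:ℚ) else 0) = 1 := by simp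
  have hb'sum : ∑ i, b' i = c - 1 := by
    simp only [hb', Finset.sum_sub_distrib, hsum, hone]
  have hpj : ∑ i, (if i = j then (1:ℚ) else 0) • p i = p j := by
    have h1 : ∀ i, (if i = j then (1:ℚ) else 0) • p i = if i = j then p i else 0 := by
      intro i; split <;> simp
    simp only [h1, Finset.sum_ite_eq' univ j p, mem_univ, if_pos]
  have hcomb : ∑ i, b' i • p i = (∑ i, b i • p i) - p j := by
    simp only [hb', sub_smul, Finset.sum_sub_distrib, hpj]
  have hmem : ∑ i, b' i • p i ∈ (c - 1) • convexHull ℚ (Set.range p) :=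
    comb_mem_smul_convexHull p j.pos b' hb'0 hb'sum
  have hxx : x - p j = (∑ i, b' i • p i) + v := by rw [hcomb, hx]; abel
  rw [hxx]
  exact Set.add_mem_add hmem hv

end Aux2

section Core
variable {n : ℕ} {σ : Set (Fin n → ℚ)}

lemma sum_ind_smul {k : ℕ} (p : Fin k → (Fin n → ℚ)) (j : Fin k) :
    ∑ i, (if i = j then (1:ℚ) else 0) • p i = p j := by
  classical
  have h1 : ∀ i, (if i = j then (1:ℚ) else 0) • p i = if i = j then p i else 0 := by
    intro i; split <;> simp
  simp only [h1, Finset.sum_ite_eq' univ j p, mem_univ, if_pos]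

lemma sum_ite_zero {k : ℕ} (j : Fin k) (w : Fin k → ℚ) :
    ∑ i, (if i = j then (0:ℚ) else w i) = ∑ i, w i - w j := by
  classical
  have h : ∀ i, (if i = j then (0:ℚ) else w i) = w i - (if i = j then w i else 0) := by
    intro i; split <;> simp
  simp only [h, Finset.sum_sub_distrib, Finset.sum_ite_eq' univ j w, mem_univ, if_pos]

lemma sum_ite_zero_smul {k : ℕ} (j : Fin k) (w : Fin k → ℚ) (p : Fin k → (Fin n → ℚ)) :
    ∑ i, (if i = j then (0:ℚ) else w i) • p i = ∑ i, w i • p i - w j • p j := by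
  classical
  have h : ∀ i, (if i = j then (0:ℚ) else w i) • p i
      = w i • p i - (if i = j then w i • p i else 0) := by
    intro i; split <;> simp
  simp only [h, Finset.sum_sub_distrib,
    Finset.sum_ite_eq' univ j (fun i => w i • p i), mem_univ, if_pos]

lemma sum_update_split {k : ℕ} (j : Fin k) (w : Fin k → ℚ) (p : Fin k → (Fin n → ℚ))
    (q : Fin n → ℚ) :
    ∑ i, w i • (if i = j then q else p i) = (∑ i, w i • p i - w j • p j) + w j • q := by
  classical
  have h : ∀ i, w i • (if i = j then q else p i)
      = (if i = j then (0:ℚ) else w i) • p i + (if i = j then w j • q else 0) := by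
    intro i; by_cases hij : i = j
    · subst hij; simp
    · simp [hij]
  simp only [h, Finset.sum_add_distrib, sum_ite_zero_smul j w p,
    Finset.sum_ite_eq' univ j (fun _ => w j • q), mem_univ, if_pos]

lemma pos_of_lt_one (hn : 1 ≤ n) (b : Fin (n+1) → ℚ) (h0 : ∀ i, 0 ≤ b i)
    (hs : ∑ i, b i = (n:ℚ)) (h1 : ∀ i, b i < 1) : ∀ i, 0 < b i := by
  intro i
  have hcard : (univ.erase i).card = n := by
    rw [Finset.card_erase_of_mem (mem_univ i), Finset.card_univ, Fintype.card_fin]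
    omega
  have hne : (univ.erase i).Nonempty := by
    rw [← Finset.card_pos, hcard]; omega
  have hlt : ∑ x ∈ univ.erase i, b x < ∑ _x ∈ univ.erase i, (1:ℚ) :=
    Finset.sum_lt_sum_of_nonempty hne fun x _ => h1 x
  have hsum1 : ∑ _x ∈ univ.erase i, (1:ℚ) = (n:ℚ) := by
    rw [Finset.sum_const, hcard]; simp
  have hsplit : b i + ∑ x ∈ univ.erase i, b x = (n:ℚ) := by
    rw [Finset.add_sum_erase univ b (mem_univ i), hs]
  linarith

lemma core (σ : Set (Fin n → ℚ)) (hn : 1 ≤ n) :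
    ∀ N : ℕ, ∀ (u : Fin (n+1) → (Fin n → ℤ)) (a : Fin (n+1) → ℚ) (v : Fin n → ℚ)
      (r : Fin n → ℤ),
    AffineIndependent ℚ (fun i => Lq (u i)) →
    (∀ i, 0 ≤ a i) → (∑ i, a i = (n : ℚ)) →
    v ∈ dualCone σ →
    Lq r = (∑ i, a i • Lq (u i)) + v →
    (latticeIn (convexHull ℚ (Set.range fun i => Lq (u i)))).ncard ≤ N →
    ∃ y : Fin n → ℤ, Lq y ∈ convexHull ℚ (Set.range fun i => Lq (u i)) ∧
      Lq r - Lq y ∈ ((n:ℚ) - 1) • convexHull ℚ (Set.range fun i => Lq (u i)) + dualCone σ := by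
  classical
  intro N
  induction N with
  | zero =>
      intro u a v r hai ha0 hasum hv hrep hcard
      exfalso
      have h1 : u 0 ∈ latticeIn (convexHull ℚ (Set.range fun i => Lq (u i))) :=
        subset_convexHull ℚ _ ⟨0, rfl⟩
      have hfin := latticeIn_finite (fun i => Lq (u i))
      have hpos := (Set.ncard_pos hfin).mpr ⟨u 0, h1⟩
      omega
  | succ N ih =>
      intro u a v r hai ha0 hasum hv hrep hcard
      set p : Fin (n+1) → (Fin n → ℚ) := fun i => Lq (u i) with hp
      -- the case v = 0, handled including the Ewald–Wessels subdivision
      have B2 : ∀ b : Fin (n+1) → ℚ, (∀ i, 0 ≤ b i) → (∑ i, b i = (n:ℚ)) →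
          Lq r = (∑ i, b i • p i) →
          ∃ y : Fin n → ℤ, Lq y ∈ convexHull ℚ (Set.range p) ∧
            Lq r - Lq y ∈ ((n:ℚ) - 1) • convexHull ℚ (Set.range p) + dualCone σ := by
        intro b hb0 hbsum hbrep
        by_cases hex : ∃ j, 1 ≤ b j
        · obtain ⟨j, hj⟩ := hex
          refine ⟨u j, subset_convexHull ℚ _ ⟨j, rfl⟩, ?_⟩
          exact peel p b hb0 hbsum j hj dc_zero (by rw [hbrep, add_zero])
        · push_neg at hex
          have hbpos := pos_of_lt_one hn b hb0 hbsum hex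
          set t : Fin n → ℤ := (∑ i, u i) - r with ht
          set β : Fin (n+1) → ℚ := fun i => 1 - b i with hβ
          have hβpos : ∀ i, 0 < β i := fun i => by simp only [hβ]; linarith [hex i]
          have hβlt : ∀ i, β i < 1 := fun i => by simp only [hβ]; linarith [hbpos i]
          have hβsum : ∑ i, β i = 1 := by
            simp only [hβ, Finset.sum_sub_distrib, hbsum, Finset.sum_const,
              Finset.card_univ, Fintype.card_fin]
            push_cast; ring
          have hLqt : Lq t = ∑ i, β i • p i := by
            simp only [ht, Lq_sub, Lq_finSum, hbrep, hβ, sub_smul, one_smul,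
              Finset.sum_sub_distrib, hp]
          obtain ⟨j, -, hjmin⟩ := Finset.exists_min_image univ (fun i => b i / β i)
            ⟨0, mem_univ 0⟩
          set lam : ℚ := b j / β j with hlam
          have hlam0 : 0 ≤ lam := div_nonneg (hb0 j) (hβpos j).le
          set g : Fin (n+1) → ℚ := fun i => b i - lam * β i with hg
          have hg0 : ∀ i, 0 ≤ g i := by
            intro i
            have h1 := hjmin i (mem_univ i)
            have h2 : lam * β i ≤ b i := by
              rw [← le_div_iff₀ (hβpos i)]; exact h1
            simp only [hg]; linarith
          have hgj : g j = 0 := by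
            have hβj : β j ≠ 0 := (hβpos j).ne'
            simp only [hg, hlam]
            field_simp; ring
          set u' : Fin (n+1) → (Fin n → ℤ) := Function.update u j t with hu'
          set p' : Fin (n+1) → (Fin n → ℚ) := fun i => Lq (u' i) with hp'
          have hp'i : ∀ i, p' i = if i = j then Lq t else p i := by
            intro i
            simp only [hp', hu', Function.update_apply]
            split <;> rfl
          set a' : Fin (n+1) → ℚ := fun i => if i = j then lam else g i with ha'
          have ha'0 : ∀ i, 0 ≤ a' i := by
            intro i; simp only [ha']; split
            · exact hlam0
            · exact hg0 i
          have hgsum : ∑ i, g i = (n:ℚ) - lam := by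
            simp only [hg, Finset.sum_sub_distrib, hbsum, ← Finset.mul_sum, hβsum, mul_one]
          have ha'sum : ∑ i, a' i = (n:ℚ) := by
            have h1 : ∀ i, a' i = (if i = j then (0:ℚ) else g i) + (if i = j then lam else 0) := by
              intro i; simp only [ha']; split <;> simp
            simp only [h1, Finset.sum_add_distrib, sum_ite_zero j g,
              Finset.sum_ite_eq' univ j (fun _ => lam), mem_univ, if_pos, hgsum, hgj]
            ring
          have hbcomb : ∑ i, g i • p i + lam • Lq t = ∑ i, b i • p i := by
            have h4 : lam • Lq t = ∑ i, (lam * β i) • p i := by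
              rw [hLqt, Finset.smul_sum]
              exact Finset.sum_congr rfl fun i _ => by rw [smul_smul]
            rw [h4, ← Finset.sum_add_distrib]
            refine Finset.sum_congr rfl fun i _ => ?_
            rw [← add_smul]
            congr 1
            simp only [hg]; ring
          have hrep' : Lq r = ∑ i, a' i • p' i := by
            have h1 : ∀ i, a' i • p' i
                = (if i = j then (0:ℚ) else g i) • p i + (if i = j then lam • Lq t else 0) := by
              intro i; by_cases hij : i = j
              · subst hij; simp [ha', hp'i]
              · simp [ha', hp'i, hij]
            rw [Finset.sum_congr rfl fun i _ => h1 i]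
            rw [Finset.sum_add_distrib, sum_ite_zero_smul j g p,
              Finset.sum_ite_eq' univ j (fun _ => lam • Lq t)]
            simp only [mem_univ, if_pos, hgj, zero_smul, sub_zero]
            rw [hbcomb, hbrep]
          have hsum_p'_as_p : ∀ w : Fin (n+1) → ℚ,
              ∑ i, w i • p' i = (∑ i, w i • p i - w j • p j) + w j • Lq t := by
            intro w
            rw [Finset.sum_congr rfl fun i _ => by rw [hp'i]]
            exact sum_update_split j w p (Lq t)
          have hai' : AffineIndependent ℚ p' := by
            rw [affineIndependent_iff_of_fintype]
            intro w hw0 hwv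
            rw [Finset.weightedVSub_eq_linear_combination univ hw0] at hwv
            set w' : Fin (n+1) → ℚ := fun i => (if i = j then 0 else w i) + w j * β i with hw'
            have hw'sum : ∑ i, w' i = 0 := by
              simp only [hw', Finset.sum_add_distrib, ← Finset.mul_sum, hβsum, mul_one,
                sum_ite_zero j w, hw0]
              ring
            have hw'v : ∑ i, w' i • p i = 0 := by
              simp only [hw', add_smul, Finset.sum_add_distrib, sum_ite_zero_smul j w p]
              have h6 : ∑ i, (w j * β i) • p i = w j • Lq t := by
                rw [hLqt, Finset.smul_sum]
                exact Finset.sum_congr rfl fun i _ => by rw [smul_smul]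
              rw [h6, ← hsum_p'_as_p w, hwv]
            have hall := (affineIndependent_iff_of_fintype ℚ p).mp hai w' hw'sum
              (by rw [Finset.weightedVSub_eq_linear_combination univ hw'sum]; exact hw'v)
            have hwj : w j = 0 := by
              have h1 : w j * β j = 0 := by
                have h2 := hall j
                simp only [hw'] at h2
                rwa [if_true, zero_add] at h2
              exact (mul_eq_zero.mp h1).resolve_right (hβpos j).ne'
            intro i
            by_cases hij : i = j
            · rw [hij]; exact hwj
            · have h1 := hall i
              simp only [hw', if_neg hij, hwj, zero_mul, add_zero] at h1
              exact h1
          have hsub : convexHull ℚ (Set.range p') ⊆ convexHull ℚ (Set.range p) := by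
            apply convexHull_min _ (convex_convexHull ℚ _)
            rintro x ⟨i, rfl⟩
            rw [hp'i]
            split
            · have h1 := comb_mem_smul_convexHull p (Nat.succ_pos n) β
                (fun i => (hβpos i).le) hβsum
              rw [one_smul, ← hLqt] at h1
              exact h1
            · exact subset_convexHull ℚ _ ⟨i, rfl⟩
          have hjnot : u j ∉ latticeIn (convexHull ℚ (Set.range p')) := by
            intro hmem
            obtain ⟨γ, hγ0, hγ1, hγx⟩ := exists_weights_of_mem_convexHull p' hmem
            set δ : Fin (n+1) → ℚ := fun i => (if i = j then 0 else γ i) + γ j * β i with hδ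
            have hδsum : ∑ i, δ i = 1 := by
              simp only [hδ, Finset.sum_add_distrib, ← Finset.mul_sum, hβsum, mul_one,
                sum_ite_zero j γ, hγ1]
              ring
            have hδcomb : ∑ i, δ i • p i = p j := by
              simp only [hδ, add_smul, Finset.sum_add_distrib, sum_ite_zero_smul j γ p]
              have h6 : ∑ i, (γ j * β i) • p i = γ j • Lq t := by
                rw [hLqt, Finset.smul_sum]
                exact Finset.sum_congr rfl fun i _ => by rw [smul_smul]
              rw [h6, ← hsum_p'_as_p γ, hγx]
            have hind : ∑ i, (if i = j then (1:ℚ) else 0) = 1 := by simp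
            have huniq := hai.eq_of_sum_eq_sum (s := univ) (w₁ := δ)
              (w₂ := fun i => if i = j then (1:ℚ) else 0)
              (by rw [hδsum, hind])
              (by rw [hδcomb, sum_ind_smul p j])
            have hδj : δ j = 1 := by
              have h1 := huniq j (mem_univ j)
              simpa using h1
            have hγj1 : γ j ≤ 1 := by
              rw [← hγ1]
              exact Finset.single_le_sum (fun i _ => hγ0 i) (mem_univ j)
            have hδjval : δ j = γ j * β j := by simp [hδ]
            rw [hδjval] at hδj
            nlinarith [hβlt j, hβpos j, hγ0 j]
          have hssub : latticeIn (convexHull ℚ (Set.range p'))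
              ⊂ latticeIn (convexHull ℚ (Set.range p)) := by
            constructor
            · intro z hz; exact hsub hz
            · intro hcon
              exact hjnot (hcon (subset_convexHull ℚ _ ⟨j, rfl⟩))
          have hcard' : (latticeIn (convexHull ℚ (Set.range p'))).ncard ≤ N := by
            have h1 := Set.ncard_lt_ncard hssub (latticeIn_finite p)
            omega
          obtain ⟨y, hy1, hy2⟩ := ih u' a' 0 r hai' ha'0 ha'sum dc_zero
            (by rw [add_zero]; exact hrep') hcard'
          refine ⟨y, hsub hy1, ?_⟩
          exact Set.add_subset_add (Set.smul_set_mono hsub) (subset_refl _) hy2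
      -- main case analysis
      by_cases hA : ∃ j, 1 ≤ a j
      · obtain ⟨j, hj⟩ := hA
        exact ⟨u j, subset_convexHull ℚ _ ⟨j, rfl⟩,
          peel p a ha0 hasum j hj hv hrep⟩
      · push_neg at hA
        have hapos := pos_of_lt_one hn a ha0 hasum hA
        have hspan : affineSpan ℚ (Set.range p) = ⊤ := by
          rw [hai.affineSpan_eq_top_iff_card_eq_finrank_add_one]
          simp [Module.finrank_pi]
        have hvspan : v ∈ vectorSpan ℚ (Set.range p) := by
          rw [AffineSubspace.vectorSpan_eq_top_of_affineSpan_eq_top ℚ _ _ hspan]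
          trivial
        rw [vectorSpan_range_eq_span_range_vsub_right ℚ p 0] at hvspan
        rw [Submodule.mem_span_range_iff_exists_fun] at hvspan
        obtain ⟨d, hd⟩ := hvspan
        set c : Fin (n+1) → ℚ := fun i => d i - (if i = 0 then ∑ l, d l else 0) with hc
        have hcsum : ∑ i, c i = 0 := by
          simp only [hc, Finset.sum_sub_distrib,
            Finset.sum_ite_eq' univ (0 : Fin (n+1)) (fun _ => ∑ l, d l), mem_univ, if_pos]
          ring
        have hcv : ∑ i, c i • p i = v := by
          have h8 : ∑ i, c i • p i = ∑ i, d i • p i - (∑ l, d l) • p 0 := by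
            simp only [hc, sub_smul, Finset.sum_sub_distrib]
            congr 1
            have h1 : ∀ i, (if i = 0 then ∑ l, d l else 0) • p i
                = if i = 0 then (∑ l, d l) • p i else 0 := by
              intro i; split <;> simp
            simp only [h1, Finset.sum_ite_eq' univ (0 : Fin (n+1))
              (fun i => (∑ l, d l) • p i), mem_univ, if_pos]
          have h9 : v = ∑ i, d i • p i - (∑ l, d l) • p 0 := by
            rw [← hd]
            simp only [vsub_eq_sub, smul_sub, Finset.sum_sub_distrib, ← Finset.sum_smul]
          rw [h8]; exact h9.symm
        by_cases hS : ∀ i, 0 ≤ c i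
        · have hc0 : ∀ i, c i = 0 := by
            intro i
            have h1 := (Finset.sum_eq_zero_iff_of_nonneg (fun i _ => hS i)).mp hcsum
            exact h1 i (mem_univ i)
          have hv0 : v = 0 := by
            rw [← hcv]
            simp [hc0]
          exact B2 a ha0 hasum (by rw [hrep, hv0, add_zero])
        · push_neg at hS
          set S : Finset (Fin (n+1)) := univ.filter (fun i => c i < 0) with hSdef
          have hSne : S.Nonempty := by
            obtain ⟨i, hi⟩ := hS
            exact ⟨i, by simp [hSdef]; linarith⟩
          obtain ⟨istar, histar, hmin⟩ := Finset.exists_min_image S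
            (fun i => a i / (-c i)) hSne
          have hcistar : c istar < 0 := by
            have h1 := histar
            simp [hSdef] at h1
            exact h1
          set eps : ℚ := a istar / (-c istar) with heps
          have heps0 : 0 ≤ eps := div_nonneg (ha0 istar) (by linarith)
          by_cases heps1 : 1 ≤ eps
          · set b : Fin (n+1) → ℚ := fun i => a i + c i with hb
            have hb0 : ∀ i, 0 ≤ b i := by
              intro i
              by_cases hci : c i < 0
              · have hiS : i ∈ S := by simp [hSdef]; linarith
                have h9 := hmin i hiS
                have h10 : 1 ≤ a i / (-c i) := le_trans heps1 h9
                rw [le_div_iff₀ (by linarith)] at h10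
                simp only [hb]; linarith
              · push_neg at hci
                simp only [hb]; linarith [ha0 i]
            have hbsum : ∑ i, b i = (n:ℚ) := by
              simp only [hb, Finset.sum_add_distrib, hasum, hcsum, add_zero]
            refine B2 b hb0 hbsum ?_
            rw [hrep, ← hcv]
            simp only [hb, add_smul, Finset.sum_add_distrib]; rfl
          · push_neg at heps1
            set b : Fin (n+1) → ℚ := fun i => a i + eps * c i with hb
            have hb0 : ∀ i, 0 ≤ b i := by
              intro i
              by_cases hci : c i < 0
              · have hiS : i ∈ S := by simp [hSdef]; linarith
                have h9 := hmin i hiS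
                have h10 : eps * (-c i) ≤ a i := by
                  rw [← le_div_iff₀ (by linarith : (0:ℚ) < -c i)]; exact h9
                simp only [hb]; linarith
              · push_neg at hci
                have h1 : 0 ≤ eps * c i := mul_nonneg heps0 hci
                simp only [hb]; linarith [ha0 i]
            have hbistar : b istar = 0 := by
              have hcne : c istar ≠ 0 := ne_of_lt hcistar
              simp only [hb, heps]
              rw [div_mul_eq_mul_div, div_neg, mul_div_assoc, div_self hcne, mul_one]
              ring
            have hbsum : ∑ i, b i = (n:ℚ) := by
              simp only [hb, Finset.sum_add_distrib, hasum, ← Finset.mul_sum, hcsum,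
                mul_zero, add_zero]
            have hbrep : Lq r = (∑ i, b i • p i) + (1 - eps) • v := by
              rw [hrep, ← hcv]
              simp only [hb, add_smul, Finset.sum_add_distrib, smul_smul]
              rw [sub_smul, one_smul, Finset.smul_sum]
              simp only [smul_smul]
              abel
            have hvv : (1 - eps) • v ∈ dualCone σ := dc_smul (by linarith) hv
            have hexb : ∃ j, 1 ≤ b j := by
              by_contra hno
              push_neg at hno
              have h1 := pos_of_lt_one hn b hb0 hbsum hno istar
              rw [hbistar] at h1
              exact lt_irrefl 0 h1
            obtain ⟨j, hj⟩ := hexb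
            exact ⟨u j, subset_convexHull ℚ _ ⟨j, rfl⟩,
              peel p b hb0 hbsum j hj hvv hbrep⟩

end Core

section Inner
variable {n : ℕ}

lemma inner_peel (σ : Set (Fin n → ℚ)) (hn : 1 ≤ n) (V : Set (Fin n → ℚ))
    (hV : ∀ x ∈ V, ∃ z : Fin n → ℤ, Lq z = x)
    (f : ℕ) (hf : n ≤ f) (r : Fin n → ℤ)
    (hr : Lq r ∈ (f:ℚ) • convexHull ℚ V + dualCone σ) :
    ∃ y : Fin n → ℤ, Lq y ∈ convexHull ℚ V ∧
      Lq (r - y) ∈ ((f:ℚ) - 1) • convexHull ℚ V + dualCone σ := by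
  classical
  obtain ⟨x, hx, v, hv, hxv⟩ := hr
  have hfpos : (0:ℚ) < (f:ℚ) := by
    have : 1 ≤ f := le_trans hn hf
    exact_mod_cast Nat.lt_of_lt_of_le Nat.zero_lt_one this
  obtain ⟨q, hq, rfl⟩ := hx
  rw [convexHull_eq_union] at hq
  simp only [Set.mem_iUnion] at hq
  obtain ⟨T, hTV, hTai, hqT⟩ := hq
  set k := T.card with hk
  have e : T ≃ Fin k := T.equivFin
  set p : Fin k → (Fin n → ℚ) := fun i => (e.symm i : Fin n → ℚ) with hpdef
  have hrange : Set.range p = (↑T : Set (Fin n → ℚ)) := by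
    ext x
    constructor
    · rintro ⟨i, rfl⟩
      exact (e.symm i).2
    · intro hx
      exact ⟨e ⟨x, hx⟩, by simp [hpdef]⟩
  have hq' : q ∈ convexHull ℚ (Set.range p) := by rw [hrange]; exact hqT
  obtain ⟨w, hw0, hw1, hwq⟩ := exists_weights_of_mem_convexHull p hq'
  set a : Fin k → ℚ := fun i => (f:ℚ) * w i with ha
  have ha0 : ∀ i, 0 ≤ a i := fun i => mul_nonneg hfpos.le (hw0 i)
  have hasum : ∑ i, a i = (f:ℚ) := by
    simp only [ha, ← Finset.mul_sum, hw1, mul_one]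
  have hxa : (f:ℚ) • q = ∑ i, a i • p i := by
    rw [← hwq, Finset.smul_sum]
    exact Finset.sum_congr rfl fun i _ => by rw [smul_smul]
  have hxv' : (f:ℚ) • q + v = Lq r := hxv
  have hrep : Lq r = (∑ i, a i • p i) + v := by rw [← hxa]; exact hxv'.symm
  have hmemV : ∀ i, p i ∈ V := fun i => hTV (by rw [← hrange]; exact ⟨i, rfl⟩)
  have hu : ∀ i, ∃ z : Fin n → ℤ, Lq z = p i := fun i => hV (p i) (hmemV i)
  choose u hupi using hu
  have hsubhull : convexHull ℚ (Set.range p) ⊆ convexHull ℚ V := by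
    apply convexHull_mono
    rw [hrange]; exact hTV
  by_cases hA : ∃ j, 1 ≤ a j
  · obtain ⟨j, hj⟩ := hA
    refine ⟨u j, ?_, ?_⟩
    · rw [hupi j]; exact subset_convexHull ℚ V (hmemV j)
    · have hpeel := peel (σ := σ) p a ha0 hasum j hj hv hrep
      rw [Lq_sub, hupi j]
      exact Set.add_subset_add (Set.smul_set_mono hsubhull) (subset_refl _) hpeel
  · push_neg at hA
    -- all weights < 1 : then f = n and k = n + 1
    have hTne : T.Nonempty := by
      by_contra h
      rw [Finset.not_nonempty_iff_eq_empty] at h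
      subst h
      simp at hqT
    have hkpos : 0 < k := Finset.card_pos.mpr hTne
    have hflt : (f:ℚ) < k := by
      calc (f:ℚ) = ∑ i, a i := hasum.symm
        _ < ∑ _i : Fin k, (1:ℚ) := Finset.sum_lt_sum_of_nonempty
            (by rwa [Finset.univ_nonempty_iff, ← Fin.pos_iff_nonempty]) (fun i _ => hA i)
        _ = k := by simp
    have hfk : f < k := by exact_mod_cast hflt
    have hpai : AffineIndependent ℚ p := by
      have := (affineIndependent_equiv (k := ℚ) e.symm).mpr hTai
      exact this
    have hkle : k ≤ n + 1 := by
      have h1 := hpai.card_le_finrank_succ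
      have h2 : Module.finrank ℚ (vectorSpan ℚ (Set.range p)) ≤ n := by
        have h3 := Submodule.finrank_le (vectorSpan ℚ (Set.range p))
        rwa [Module.finrank_pi, Fintype.card_fin] at h3
      rw [Fintype.card_fin] at h1
      omega
    have hfn : f = n := by omega
    have hkn : k = n + 1 := by omega
    -- reindex to `Fin (n+1)` and apply the core lemma
    have e2 : Fin (n+1) ≃ Fin k := finCongr hkn.symm
    set p2 : Fin (n+1) → (Fin n → ℚ) := p ∘ e2 with hp2
    set u2 : Fin (n+1) → (Fin n → ℤ) := u ∘ e2 with hu2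
    set a2 : Fin (n+1) → ℚ := a ∘ e2 with ha2
    have hp2u : (fun i => Lq (u2 i)) = p2 := by
      funext i; exact hupi (e2 i)
    have hai2 : AffineIndependent ℚ (fun i => Lq (u2 i)) := by
      rw [hp2u]
      exact (affineIndependent_equiv (k := ℚ) e2).mpr hpai
    have ha20 : ∀ i, 0 ≤ a2 i := fun i => ha0 (e2 i)
    have ha2sum : ∑ i, a2 i = (n:ℚ) := by
      have h1 : ∑ i, a2 i = ∑ i, a i := Fintype.sum_equiv e2 _ _ (fun i => rfl)
      rw [h1, hasum]
      exact_mod_cast hfn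
    have hrange2 : Set.range p2 = Set.range p := e2.surjective.range_comp p
    have hrep2 : Lq r = (∑ i, a2 i • Lq (u2 i)) + v := by
      rw [hrep]
      congr 1
      rw [show (fun i => a2 i • Lq (u2 i)) = fun i => a2 i • p2 i from by
        funext i; rw [congrFun hp2u i]]
      exact (Fintype.sum_equiv e2 _ _ (fun i => rfl)).symm
    obtain ⟨y, hy1, hy2⟩ := core σ hn
      ((latticeIn (convexHull ℚ (Set.range fun i => Lq (u2 i)))).ncard)
      u2 a2 v r hai2 ha20 ha2sum hv hrep2 (le_refl _)
    have hrangeu : Set.range (fun i => Lq (u2 i)) = Set.range p := by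
      rw [show (fun i => Lq (u2 i)) = p2 from hp2u, hrange2]
    refine ⟨y, ?_, ?_⟩
    · apply hsubhull
      rw [← hrangeu]
      exact hy1
    · rw [Lq_sub]
      have hcast : ((f:ℚ) - 1) = ((n:ℚ) - 1) := by rw [hfn]
      rw [hcast]
      refine Set.add_subset_add (Set.smul_set_mono ?_) (subset_refl _) hy2
      rw [hrangeu]
      exact hsubhull

end Inner

section Key
variable {n : ℕ}

lemma key (σ : Set (Fin n → ℚ)) (hn : 1 ≤ n) (V : Set (Fin n → ℚ))
    (hV : ∀ x ∈ V, ∃ z : Fin n → ℤ, Lq z = x) :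
    ∀ (M : ℕ) (z : Fin n → ℤ),
      Lq z ∈ (M:ℚ) • convexHull ℚ V + dualCone σ →
      ∃ (f : ℕ) (L : List (Fin n → ℤ)), f ≤ n - 1 ∧ f ≤ M ∧ L.length = M - f ∧
        (∀ y ∈ L, Lq y ∈ convexHull ℚ V) ∧
        Lq (z - L.sum) ∈ (f:ℚ) • convexHull ℚ V + dualCone σ := by
  intro M
  induction M with
  | zero =>
      intro z hz
      exact ⟨0, [], Nat.zero_le _, le_refl 0, rfl, by simp, by simpa using hz⟩
  | succ M ih =>
      intro z hz
      by_cases hM : M + 1 ≤ n - 1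
      · exact ⟨M + 1, [], hM, le_refl _, by simp, by simp, by simpa using hz⟩
      · have hMn : n ≤ M + 1 := by omega
        obtain ⟨y, hy1, hy2⟩ := inner_peel σ hn V hV (M+1) hMn z hz
        have hcast : ((M+1 : ℕ):ℚ) - 1 = (M:ℚ) := by push_cast; ring
        rw [hcast] at hy2
        obtain ⟨f, L, hf1, hf2, hf3, hf4, hf5⟩ := ih (z - y) hy2
        refine ⟨f, y :: L, hf1, by omega, by simp [hf3]; omega, ?_, ?_⟩
        · intro x hx
          rcases List.mem_cons.mp hx with h | h
          · subst h; exact hy1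
          · exact hf4 x h
        · have : z - (y :: L).sum = (z - y) - L.sum := by
            simp [List.sum_cons]
            abel
          rw [this]
          exact hf5

end Key

section Mink
variable {n : ℕ}

lemma mink_two {σv P : Set (Fin n → ℚ)} (k : ℕ) :
    mink σv P (k + 2) = mink σv P (k + 1) + P := rfl

lemma mink_succ {σv P : Set (Fin n → ℚ)} (k : ℕ) (hk : 1 ≤ k) :
    mink σv P (k + 1) = mink σv P k + P := by
  obtain ⟨k', rfl⟩ := Nat.exists_eq_add_of_le hk
  rw [show 1 + k' + 1 = k' + 2 by omega, show 1 + k' = k' + 1 by omega]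
  exact mink_two k'

lemma mink_formula (σ : Set (Fin n → ℚ)) {Q : Set (Fin n → ℚ)} (hQ : Convex ℚ Q) :
    ∀ k : ℕ, 1 ≤ k →
      mink (dualCone σ) (Q + dualCone σ) k = (k:ℚ) • Q + dualCone σ := by
  intro k hk
  induction k with
  | zero => omega
  | succ k ih =>
      rcases Nat.eq_zero_or_pos k with h0 | hk1
      · subst h0
        show Q + dualCone σ = _
        norm_num
      · rw [mink_succ k hk1, ih hk1]
        have h1 : ((k+1 : ℕ):ℚ) • Q = (k:ℚ) • Q + (1:ℚ) • Q := by
          rw [← hQ.add_smul (by positivity) zero_le_one]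
          norm_num
        rw [h1, one_smul]
        have h2 : ((k:ℚ) • Q + dualCone σ) + (Q + dualCone σ)
            = ((k:ℚ) • Q + Q) + (dualCone σ + dualCone σ) := by ac_rfl
        rw [h2, dc_addself]

lemma mink_cone (σ : Set (Fin n → ℚ)) :
    ∀ k : ℕ, 1 ≤ k → mink (dualCone σ) (dualCone σ) k = dualCone σ := by
  intro k hk
  induction k with
  | zero => omega
  | succ k ih =>
      rcases Nat.eq_zero_or_pos k with h0 | hk1
      · subst h0; rfl
      · rw [mink_succ k hk1, ih hk1, dc_addself]

lemma mink_nonempty {σv P : Set (Fin n → ℚ)} (hσv : σv.Nonempty) (hP : P.Nonempty) :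
    ∀ k, (mink σv P k).Nonempty := by
  intro k
  induction k with
  | zero => exact hσv
  | succ k ih =>
      rcases Nat.eq_zero_or_pos k with h0 | hk1
      · subst h0; exact hP
      · rw [mink_succ k hk1]
        exact ih.add hP

end Mink

section Chunk
variable {n : ℕ}

lemma chunk (σ : Set (Fin n → ℚ)) {Q : Set (Fin n → ℚ)} (hQ : Convex ℚ Q)
    (hQne : Q.Nonempty) (e : ℕ) :
    ∀ (s : ℕ), 1 ≤ s → ∀ (z : Fin n → ℤ) (f : ℕ) (L : List (Fin n → ℤ)), f ≤ e →
      L.length = s * e - f → f ≤ s * e →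
      (∀ y ∈ L, Lq y ∈ Q) →
      Lq (z - L.sum) ∈ (f:ℚ) • Q + dualCone σ →
      ∃ g : Fin s → (Fin n → ℤ), (∀ i, Lq (g i) ∈ (e:ℚ) • Q + dualCone σ) ∧ z = ∑ i, g i := by
  intro s
  induction s with
  | zero => omega
  | succ s ih =>
      intro hs z f L hfe hlen hfse hLQ hrem
      rcases Nat.eq_zero_or_pos s with h0 | hs1
      · -- s = 1 : single chunk
        subst h0
        refine ⟨fun _ => z, ?_, by simp⟩
        intro i
        have hsum : Lq L.sum ∈ ((L.length : ℚ)) • Q := by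
          rw [Lq_listSum, show ((L.length:ℕ):ℚ) = (((List.map Lq L).length:ℕ):ℚ) by simp]
          apply list_sum_mem_smul_convex hQ hQne
          intro x hx
          rw [List.mem_map] at hx
          obtain ⟨y, hy, rfl⟩ := hx
          exact hLQ y hy
        have hzeq : Lq z = Lq (z - L.sum) + Lq L.sum := by
          rw [← Lq_add, sub_add_cancel]
        have hmem : Lq z ∈ ((f:ℚ) • Q + dualCone σ) + ((L.length : ℚ)) • Q :=
          hzeq ▸ Set.add_mem_add hrem hsum
        have hlen' : ((L.length : ℚ)) = (e:ℚ) - (f:ℚ) := by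
          rw [hlen]
          have : 1 * e - f = e - f := by omega
          rw [this]
          push_cast [Nat.cast_sub hfe]
          ring
        have hQeq : ((f:ℚ) • Q + dualCone σ) + ((L.length : ℚ)) • Q
            = (e:ℚ) • Q + dualCone σ := by
          rw [hlen', show ((e:ℚ) - (f:ℚ)) = ((e:ℚ) - f) from rfl]
          have h2 : (f:ℚ) • Q + ((e:ℚ) - f) • Q = (e:ℚ) • Q := by
            rw [← hQ.add_smul (by positivity) (by
              have : (f:ℚ) ≤ (e:ℚ) := by exact_mod_cast hfe
              linarith)]
            norm_num
          rw [← h2]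
          ac_rfl
        rw [hQeq] at hmem
        exact hmem
      · -- s + 1 ≥ 2 : peel one chunk of size e
        have hlenge : e ≤ L.length := by
          rw [hlen]
          have h1 : f ≤ s * e := le_trans hfe (by nlinarith)
          have h2 : (s+1) * e = s * e + e := by ring
          omega
        set L1 := L.take e with hL1
        set L2 := L.drop e with hL2
        have hlen1 : L1.length = e := by
          rw [hL1, List.length_take]
          omega
        have hlen2 : L2.length = s * e - f := by
          rw [hL2, List.length_drop, hlen]
          have h1 : 1 ≤ s := hs1
          have h2 : f ≤ s * e := by nlinarith [hfe]
          have : (s+1) * e = s * e + e := by ring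
          omega
        have happend : L1 ++ L2 = L := List.take_append_drop e L
        have hmem1 : ∀ y ∈ L1, Lq y ∈ Q := fun y hy => hLQ y (by
          rw [← happend]; exact List.mem_append_left _ hy)
        have hmem2 : ∀ y ∈ L2, Lq y ∈ Q := fun y hy => hLQ y (by
          rw [← happend]; exact List.mem_append_right _ hy)
        have hfse2 : f ≤ s * e := by nlinarith [hfe]
        have hrem2 : Lq ((z - L1.sum) - L2.sum) ∈ (f:ℚ) • Q + dualCone σ := by
          have : (z - L1.sum) - L2.sum = z - L.sum := by
            rw [← happend, List.sum_append]
            abel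
          rw [this]
          exact hrem
        obtain ⟨g', hg'1, hg'2⟩ := ih hs1 (z - L1.sum) f L2 hfe hlen2 hfse2 hmem2 hrem2
        refine ⟨Fin.cons L1.sum g', ?_, ?_⟩
        · intro i
          refine Fin.cases ?_ ?_ i
          · show Lq L1.sum ∈ _
            have hsum : Lq L1.sum ∈ ((L1.length : ℚ)) • Q := by
              rw [Lq_listSum, show ((L1.length:ℕ):ℚ) = (((List.map Lq L1).length:ℕ):ℚ) by simp]
              apply list_sum_mem_smul_convex hQ hQne
              intro x hx
              rw [List.mem_map] at hx
              obtain ⟨y, hy, rfl⟩ := hx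
              exact hmem1 y hy
            rw [hlen1] at hsum
            exact ⟨Lq L1.sum, hsum, 0, dc_zero, add_zero _⟩
          · intro j
            simpa using hg'1 j
        · rw [Fin.sum_cons, ← hg'2]
          abel

end Chunk

section Main
variable {n : ℕ} {σ : Set (Fin n → ℚ)}

lemma dc_sum {s : ℕ} (g : Fin s → (Fin n → ℚ)) (h : ∀ i, g i ∈ dualCone σ) :
    ∑ i, g i ∈ dualCone σ := by
  classical
  apply Finset.sum_induction g (· ∈ dualCone σ) (fun a b ha hb => dc_add ha hb) dc_zero
  intro i _
  exact h i

theorem statement12' (σ : Set (Fin n → ℚ))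
    (P : Set (Fin n → ℚ)) (hP : IsIntegralPoly (dualCone σ) P)
    (e : ℕ) (he : n - 1 ≤ e) :
    ∀ s : ℕ, 1 ≤ s → ∀ m : Fin n → ℤ,
      Lq m ∈ mink (dualCone σ) (mink (dualCone σ) P e) s ↔
        ∃ f : Fin s → (Fin n → ℤ),
          (∀ i, Lq (f i) ∈ mink (dualCone σ) P e) ∧ m = ∑ i, f i := by
  classical
  obtain ⟨F, hFne, hPeq⟩ := hP
  subst hPeq
  intro s hs m
  set V : Set (Fin n → ℚ) := Lq '' (↑F : Set (Fin n → ℤ)) with hVdef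
  set Q0 : Set (Fin n → ℚ) := convexHull ℚ V with hQ0def
  have hV : ∀ x ∈ V, ∃ z : Fin n → ℤ, Lq z = x := by
    rintro x ⟨z, _, rfl⟩; exact ⟨z, rfl⟩
  have hQconv : Convex ℚ Q0 := convex_convexHull ℚ V
  have hVne : V.Nonempty := by
    obtain ⟨x, hx⟩ := hFne
    exact ⟨Lq x, ⟨x, hx, rfl⟩⟩
  have hQne : Q0.Nonempty := hVne.mono (subset_convexHull ℚ V)
  have hdcne : (dualCone σ).Nonempty := ⟨0, dc_zero⟩
  have hPne : (Q0 + dualCone σ).Nonempty := hQne.add hdcne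
  rcases Nat.eq_zero_or_pos n with hn0 | hn
  · -- n = 0 : the space is a single point
    subst hn0
    constructor
    · intro _
      refine ⟨fun _ => 0, fun i => ?_, Subsingleton.elim _ _⟩
      obtain ⟨x, hx⟩ := mink_nonempty hdcne hPne e
      rw [Subsingleton.elim (Lq (0 : Fin 0 → ℤ)) x]
      exact hx
    · intro _
      obtain ⟨x, hx⟩ := mink_nonempty (mink_nonempty hdcne hPne e |>.mono
        (by intro y hy; exact hy) |> fun h => hdcne) (mink_nonempty hdcne hPne e) s
      rw [Subsingleton.elim (Lq m) x]
      exact hx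
  · rcases Nat.eq_zero_or_pos e with he0 | he1
    · -- e = 0 (so n = 1) : everything is the dual cone
      subst he0
      have h0 : mink (dualCone σ) (Q0 + dualCone σ) 0 = dualCone σ := rfl
      rw [h0, mink_cone σ s hs]
      constructor
      · intro hm
        refine ⟨fun i => if i = ⟨0, hs⟩ then m else 0, ?_, ?_⟩
        · intro i
          show Lq (if i = ⟨0, hs⟩ then m else 0) ∈ dualCone σ
          by_cases h : i = ⟨0, hs⟩
          · rw [if_pos h]; exact hm
          · rw [if_neg h, Lq_zero]; exact dc_zero
        · rw [Finset.sum_ite_eq' univ (⟨0, hs⟩ : Fin s) (fun _ => m)]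
          simp
      · rintro ⟨g, hg, rfl⟩
        rw [Lq_finSum]
        exact dc_sum _ hg
    · -- main case : n ≥ 1, e ≥ 1
      have hQ2conv : Convex ℚ ((e:ℚ) • Q0) := hQconv.smul _
      have hEeq : mink (dualCone σ) (Q0 + dualCone σ) e = (e:ℚ) • Q0 + dualCone σ :=
        mink_formula σ hQconv e he1
      have hSeq : mink (dualCone σ) (mink (dualCone σ) (Q0 + dualCone σ) e) s
          = ((s*e : ℕ):ℚ) • Q0 + dualCone σ := by
        rw [hEeq, mink_formula σ hQ2conv s hs, smul_smul, ← Nat.cast_mul]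
      constructor
      · intro hm
        rw [hSeq] at hm
        obtain ⟨f, L, hf1, hf2, hf3, hf4, hf5⟩ := key σ hn V hV (s*e) m hm
        have hfe : f ≤ e := le_trans hf1 he
        obtain ⟨g, hg1, hg2⟩ := chunk σ hQconv hQne e s hs m f L hfe hf3 hf2 hf4 hf5
        exact ⟨g, fun i => by rw [hEeq]; exact hg1 i, hg2⟩
      · rintro ⟨g, hg, rfl⟩
        rw [hSeq, Lq_finSum]
        have hg' : ∀ i, Lq (g i) ∈ (e:ℚ) • Q0 + dualCone σ := fun i => by
          rw [← hEeq]; exact hg i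
        choose qf hqf vf hvf hsumi using hg'
        have hsplit : ∑ i, Lq (g i) = (∑ i, qf i) + (∑ i, vf i) := by
          rw [← Finset.sum_add_distrib]
          exact Finset.sum_congr rfl fun i _ => (hsumi i).symm
        rw [hsplit]
        apply Set.add_mem_add
        · have h1 := fin_sum_mem_smul_convex hQ2conv (hQne.smul_set) qf hqf
          rw [smul_smul, ← Nat.cast_mul] at h1
          exact h1
        · exact dc_sum _ hvf

end Main

/-- if `σ ⊆ ℚⁿ` is an `n`-dimensional pointed polyhedral cone and `P` an
integral `σ∨`-polyhedron, then for every `e ≥ n - 1` the polyhedron `eP` is normal: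
every lattice point of `s·(eP)` is a sum of `s` lattice points of `eP`, for all `s ≥ 1`. -/
theorem statement12 {n : ℕ} (σ : Set (Fin n → ℚ))
    (hσ : IsPolyhedralCone σ) (hσp : Pointed σ)
    (hdim : Submodule.span ℚ σ = ⊤)
    (P : Set (Fin n → ℚ)) (hP : IsIntegralPoly (dualCone σ) P)
    (e : ℕ) (he : n - 1 ≤ e) :
    ∀ s : ℕ, 1 ≤ s → ∀ m : Fin n → ℤ,
      Lq m ∈ mink (dualCone σ) (mink (dualCone σ) P e) s ↔
        ∃ f : Fin s → (Fin n → ℤ),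
          (∀ i, Lq (f i) ∈ mink (dualCone σ) P e) ∧ m = ∑ i, f i :=
  statement12' σ P hP e he

end Paper
end
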